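/- Let J, Δ, γ be real numbers with J_eff := √(Δ² + 4J²) > 0, and let A := A_H + A_L be the real 3×3 matrix with A_H := [[0, Δ, 0],[−Δ, 0, −2J],[0, 2J, 0]] and A_L := (−γ/J_eff²)·[[Δ², 0, 2ΔJ],[0, J_eff², 0],[2ΔJ, 0, 4J²]]. Then, viewing A as a complex matrix, its characteristic polynomial equals X·(X − (−γ + i·J_eff))·(X − (−γ − i·J_eff)); in particular the eigenvalues of A are 0 and −γ ± i·J_eff, A is singular, and if moreover γ ≥ 0 then A has rank 2. -/

import Mathlib

open Polynomial Matrix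

lemma eval_charpoly_fin3 (M : Matrix (Fin 3) (Fin 3) ℂ) (μ : ℂ) :
    M.charpoly.eval μ = (Matrix.scalar (Fin 3) μ - M).det := by
  rw [Matrix.charpoly, _root_.eval_det, matPolyEquiv_charmatrix]
  simp

lemma mem_spectrum_fin3 (M : Matrix (Fin 3) (Fin 3) ℂ) (μ : ℂ) :
    μ ∈ spectrum ℂ M ↔ M.charpoly.eval μ = 0 := by
  rw [spectrum.mem_iff, Matrix.isUnit_iff_isUnit_det, isUnit_iff_ne_zero, not_ne_iff,
    eval_charpoly_fin3]
  rfl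

theorem bloch_generator_spectrum
    (J Δ γ Jeff : ℝ)
    (hJeff : Jeff = Real.sqrt (Δ ^ 2 + 4 * J ^ 2)) (hpos : 0 < Jeff)
    (AH AL : Matrix (Fin 3) (Fin 3) ℝ)
    (hAH : AH = !![0, Δ, 0; -Δ, 0, -2 * J; 0, 2 * J, 0])
    (hAL : AL = (-γ / Jeff ^ 2) •
      !![Δ ^ 2, 0, 2 * Δ * J; 0, Jeff ^ 2, 0; 2 * Δ * J, 0, 4 * J ^ 2]) :
    Matrix.charpoly ((AH + AL).map (Complex.ofReal ·))
        = Polynomial.X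
          * (Polynomial.X - Polynomial.C (-(γ : ℂ) + (Jeff : ℂ) * Complex.I))
          * (Polynomial.X - Polynomial.C (-(γ : ℂ) - (Jeff : ℂ) * Complex.I)) ∧
    spectrum ℂ ((AH + AL).map (Complex.ofReal ·))
        = {0, -(γ : ℂ) + (Jeff : ℂ) * Complex.I, -(γ : ℂ) - (Jeff : ℂ) * Complex.I} ∧
    (AH + AL).det = 0 ∧
    (0 ≤ γ → (AH + AL).rank = 2) := by
  have hE : Jeff ^ 2 = Δ ^ 2 + 4 * J ^ 2 := by
    rw [hJeff, Real.sq_sqrt (by positivity)]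
  have hJne : Jeff ≠ 0 := ne_of_gt hpos
  set s : ℝ := γ / Jeff ^ 2 with hs
  have hγ : γ = s * (Δ ^ 2 + 4 * J ^ 2) := by
    rw [hs, ← hE]; field_simp
  have hγc : (γ : ℂ) = (s : ℂ) * ((Δ : ℂ) ^ 2 + 4 * (J : ℂ) ^ 2) := by
    rw [← Complex.ofReal_pow, ← Complex.ofReal_pow]; push_cast [hγ]; ring
  have hEc : (Jeff : ℂ) ^ 2 = (Δ : ℂ) ^ 2 + 4 * (J : ℂ) ^ 2 := by
    rw [← Complex.ofReal_pow, hE]; push_cast; ring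
  -- explicit form of A
  have hA : AH + AL = !![-(s * Δ ^ 2), Δ, -(2 * s * Δ * J);
      -Δ, -γ, -2 * J;
      -(2 * s * Δ * J), 2 * J, -(4 * s * J ^ 2)] := by
    subst hAH hAL
    ext i j
    fin_cases i <;> fin_cases j <;>
      simp [Matrix.smul_apply, hs] <;> field_simp <;> ring
  set a : ℂ := -(γ : ℂ) + (Jeff : ℂ) * Complex.I with ha
  set b : ℂ := -(γ : ℂ) - (Jeff : ℂ) * Complex.I with hb
  set Ac : Matrix (Fin 3) (Fin 3) ℂ := (AH + AL).map (Complex.ofReal ·) with hAc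
  have hab : ∀ μ : ℂ, (μ - a) * (μ - b) = (μ + γ) ^ 2 + (Jeff : ℂ) ^ 2 := by
    intro μ
    rw [ha, hb]
    linear_combination (-(Jeff : ℂ) ^ 2) * Complex.I_sq
  -- characteristic polynomial
  have hcp : Ac.charpoly = X * (X - C a) * (X - C b) := by
    apply Polynomial.funext
    intro μ
    rw [eval_charpoly_fin3]
    have hm : Matrix.scalar (Fin 3) μ - Ac =
        !![μ + s * Δ ^ 2, -Δ, 2 * s * Δ * J;
          Δ, μ + γ, 2 * J;
          2 * s * Δ * J, -2 * J, μ + 4 * s * J ^ 2] := by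
      rw [hAc, hA]
      ext i j
      fin_cases i <;> fin_cases j <;>
        simp [Matrix.scalar, Matrix.diagonal]
    rw [hm, Matrix.det_fin_three]
    simp only [eval_mul, eval_sub, eval_X, eval_C]
    conv_rhs => rw [mul_assoc, hab μ]
    simp only [Matrix.cons_val', Matrix.cons_val_zero, Matrix.cons_val_one, Matrix.head_cons,
      Matrix.empty_val', Matrix.cons_val_fin_one, Matrix.head_fin_const, Matrix.cons_val_two,
      Matrix.tail_cons, Matrix.of_apply]
    rw [hEc, hγc]
    ring
  refine ⟨hcp, ?_, ?_, ?_⟩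
  · ext μ
    rw [mem_spectrum_fin3, hcp]
    simp only [eval_mul, eval_sub, eval_X, eval_C, mul_eq_zero, sub_eq_zero,
      Set.mem_insert_iff, Set.mem_singleton_iff]
    tauto
  · have h0 : Ac.charpoly.eval 0 = 0 := by rw [hcp]; simp
    rw [eval_charpoly_fin3] at h0
    simp only [map_zero, zero_sub, Matrix.det_neg, Fintype.card_fin] at h0
    have hdetc : Ac.det = 0 := by
      have : (-1 : ℂ) ^ 3 * Ac.det = 0 := h0
      simpa using this
    have : ((AH + AL).det : ℂ) = 0 := by
      rw [← hdetc, hAc]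
      exact RingHom.map_det Complex.ofRealHom (AH + AL)
    exact_mod_cast this
  · intro _
    have hcase : Δ ≠ 0 ∨ J ≠ 0 := by
      by_contra h
      push_neg at h
      rw [h.1, h.2] at hE
      norm_num at hE
      exact absurd hE (by positivity)
    -- upper bound : kernel vector
    set v : Matrix (Fin 3) (Fin 1) ℝ := !![2 * J; 0; -Δ] with hv
    have hker : (AH + AL) * v = 0 := by
      rw [hA, hv]
      ext i j
      fin_cases i <;> fin_cases j <;>
        simp [Matrix.mul_apply, Fin.sum_univ_three] <;> ring
    have hvrank : 1 ≤ v.rank := by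
      rw [Matrix.rank, Nat.one_le_iff_ne_zero]
      intro hzero
      have hbot : LinearMap.range v.mulVecLin = ⊥ :=
        Submodule.finrank_eq_zero.mp hzero
      have hmem : v.mulVec (fun _ => 1) ∈ LinearMap.range v.mulVecLin :=
        ⟨fun _ => 1, rfl⟩
      rw [hbot, Submodule.mem_bot] at hmem
      rcases hcase with hΔ | hJ
      · have := congrFun hmem 2
        simp [hv, Matrix.mulVec, dotProduct, Fin.sum_univ_one] at this
        exact hΔ this
      · have := congrFun hmem 0
        simp [hv, Matrix.mulVec, dotProduct, Fin.sum_univ_one] at this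
        exact hJ this
    have hub : (AH + AL).rank ≤ 2 := by
      have := Matrix.rank_add_rank_le_card_of_mul_eq_zero hker
      simp only [Fintype.card_fin] at this
      omega
    -- lower bound : invertible 2x2 compression
    have hsγ : s * γ = γ ^ 2 / Jeff ^ 2 := by rw [hs]; ring
    have hlb : 2 ≤ (AH + AL).rank := by
      rcases hcase with hΔ | hJ
      · set P : Matrix (Fin 2) (Fin 3) ℝ := !![1,0,0;0,1,0] with hP
        set Q : Matrix (Fin 3) (Fin 2) ℝ := !![1,0;0,1;0,0] with hQ
        have hM : P * ((AH + AL) * Q) = !![-(s * Δ ^ 2), Δ; -Δ, -γ] := by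
          rw [hA, hP, hQ]
          ext i j
          fin_cases i <;> fin_cases j <;>
            simp [Matrix.mul_apply, Fin.sum_univ_three, Fin.sum_univ_two]
        have hdet : (P * ((AH + AL) * Q)).det ≠ 0 := by
          rw [hM, Matrix.det_fin_two_of]
          have : -(s * Δ ^ 2) * -γ - Δ * (-Δ) = γ ^ 2 / Jeff ^ 2 * Δ ^ 2 + Δ ^ 2 := by
            rw [← hsγ]; ring
          rw [this]
          positivity
        have hunit : IsUnit (P * ((AH + AL) * Q)) :=
          (Matrix.isUnit_iff_isUnit_det _).mpr (isUnit_iff_ne_zero.mpr hdet)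
        have h2 : (P * ((AH + AL) * Q)).rank = 2 := by
          rw [Matrix.rank_of_isUnit _ hunit, Fintype.card_fin]
        calc 2 = (P * ((AH + AL) * Q)).rank := h2.symm
          _ ≤ ((AH + AL) * Q).rank := Matrix.rank_mul_le_right _ _
          _ ≤ (AH + AL).rank := Matrix.rank_mul_le_left _ _
      · set P : Matrix (Fin 2) (Fin 3) ℝ := !![0,1,0;0,0,1] with hP
        set Q : Matrix (Fin 3) (Fin 2) ℝ := !![0,0;1,0;0,1] with hQ
        have hM : P * ((AH + AL) * Q) = !![-γ, -2 * J; 2 * J, -(4 * s * J ^ 2)] := by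
          rw [hA, hP, hQ]
          ext i j
          fin_cases i <;> fin_cases j <;>
            simp [Matrix.mul_apply, Fin.sum_univ_three, Fin.sum_univ_two]
        have hdet : (P * ((AH + AL) * Q)).det ≠ 0 := by
          rw [hM, Matrix.det_fin_two_of]
          have : -γ * -(4 * s * J ^ 2) - -2 * J * (2 * J) =
              4 * (γ ^ 2 / Jeff ^ 2) * J ^ 2 + 4 * J ^ 2 := by
            rw [← hsγ]; ring
          rw [this]
          positivity
        have hunit : IsUnit (P * ((AH + AL) * Q)) :=
          (Matrix.isUnit_iff_isUnit_det _).mpr (isUnit_iff_ne_zero.mpr hdet)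
        have h2 : (P * ((AH + AL) * Q)).rank = 2 := by
          rw [Matrix.rank_of_isUnit _ hunit, Fintype.card_fin]
        calc 2 = (P * ((AH + AL) * Q)).rank := h2.symm
          _ ≤ ((AH + AL) * Q).rank := Matrix.rank_mul_le_right _ _
          _ ≤ (AH + AL).rank := Matrix.rank_mul_le_left _ _
    omega
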